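/- For every natural number m ≥ 1 and every real x with −1/2 < x < 1/2, one has 0 < cos(πx) − P_m(x) < (π^{2m+2} (1/4 − x²)^{m+1} / (2m+2)!) · 1/(1 − q_m), where q_m := (π²/4)/((2m+4)(2m+3)). -/

import Mathlib

open Real

/-- The summand `a_{j,k} = (-π²/4)^k / (2j+2k)! · C(j+k, j)`. -/
noncomputable def a (j k : ℕ) : ℝ :=
  (-(π ^ 2) / 4) ^ k / (Nat.factorial (2 * j + 2 * k)) * (Nat.choose (j + k) j)

/-- `t_j = Σ_{k=0}^∞ a_{j,k}`. -/
noncomputable def t (j : ℕ) : ℝ := ∑' k : ℕ, a j k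

/-- `P_m(x) = Σ_{j=1}^m t_j π^{2j} (1/4 − x²)^j`. -/
noncomputable def P (m : ℕ) (x : ℝ) : ℝ :=
  ∑ j ∈ Finset.Icc 1 m, t j * π ^ (2 * j) * (1 / 4 - x ^ 2) ^ j

lemma pi_sq_lt_twelve : π ^ 2 < 12 := by
  nlinarith [Real.pi_lt_d2, Real.pi_pos]

lemma abs_a (j k : ℕ) :
    |a j k| = (π ^ 2 / 4) ^ k / (Nat.factorial (2 * j + 2 * k)) * (Nat.choose (j + k) j) := by
  unfold a
  rw [abs_mul, abs_div, abs_pow, abs_div, abs_neg, abs_of_nonneg (by positivity : (0:ℝ) ≤ π ^ 2)]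
  simp [abs_of_nonneg, Nat.cast_nonneg]

lemma choose_le_two_pow' (n k : ℕ) : Nat.choose n k ≤ 2 ^ n := by
  rcases le_or_gt k n with h | h
  · calc Nat.choose n k ≤ ∑ i ∈ Finset.range (n+1), Nat.choose n i :=
          Finset.single_le_sum (fun i _ => Nat.zero_le _) (Finset.mem_range.mpr (by omega))
    _ = 2 ^ n := Nat.sum_range_choose n
  · rw [Nat.choose_eq_zero_of_lt h]; positivity

lemma abs_a_le (j k : ℕ) : |a j k| ≤ 2 ^ j * ((π ^ 2 / 2) ^ k / Nat.factorial k) := by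
  rw [abs_a]
  have h1 : (Nat.choose (j + k) j : ℝ) ≤ 2 ^ (j + k) := by
    exact_mod_cast choose_le_two_pow' (j + k) j
  have h2 : (Nat.factorial k : ℝ) ≤ Nat.factorial (2 * j + 2 * k) := by
    exact_mod_cast Nat.factorial_le (by omega)
  have hk : (0:ℝ) < Nat.factorial k := by positivity
  have hd : (π ^ 2 / 4) ^ k / (Nat.factorial (2 * j + 2 * k)) ≤ (π ^ 2 / 4) ^ k / Nat.factorial k :=
    div_le_div_of_nonneg_left (by positivity) hk h2
  have h24 : (π ^ 2 / 4) * 2 = π ^ 2 / 2 := by ring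
  calc (π ^ 2 / 4) ^ k / (Nat.factorial (2 * j + 2 * k)) * (Nat.choose (j + k) j)
      ≤ (π ^ 2 / 4) ^ k / Nat.factorial k * 2 ^ (j + k) := by
        apply mul_le_mul hd h1 (by positivity) (by positivity)
    _ = ((π ^ 2 / 4) ^ k * 2 ^ k) / Nat.factorial k * 2 ^ j := by rw [pow_add]; ring
    _ = 2 ^ j * ((π ^ 2 / 2) ^ k / Nat.factorial k) := by rw [← mul_pow, h24]; ring

lemma summable_abs_a (j : ℕ) : Summable fun k => |a j k| := by
  apply Summable.of_nonneg_of_le (fun k => abs_nonneg _) (abs_a_le j)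
  exact (Real.summable_pow_div_factorial (π ^ 2 / 2)).mul_left _

lemma summable_a (j : ℕ) : Summable (a j) := (summable_abs_a j).of_abs

lemma nat_choose_ineq (j k : ℕ) (hj : 1 ≤ j) :
    6 * Nat.choose (j + k + 1) j ≤ Nat.choose (j + k) j * ((2*j+2*k+2) * (2*j+2*k+1)) := by
  have h2 : Nat.choose (j + k) k = Nat.choose (j + k) j := by
    have e : j + k = k + j := by omega
    rw [e, Nat.choose_symm_add]
  have h3 : Nat.choose (j + k + 1) (k + 1) = Nat.choose (j + k + 1) j := by
    have e : j + k + 1 = (k + 1) + j := by omega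
    rw [e, Nat.choose_symm_add]
  have h1 := Nat.add_one_mul_choose_eq (j + k) k
  rw [h2, h3] at h1
  have h4 : Nat.choose (j + k + 1) j ≤ (j + k + 1) * Nat.choose (j + k) j := by
    calc Nat.choose (j + k + 1) j ≤ Nat.choose (j + k + 1) j * (k + 1) :=
          Nat.le_mul_of_pos_right _ (by omega)
      _ = (j + k + 1) * Nat.choose (j + k) j := h1.symm
  calc 6 * Nat.choose (j + k + 1) j ≤ 6 * ((j + k + 1) * Nat.choose (j + k) j) :=
        Nat.mul_le_mul_left _ h4
    _ = (6 * (j + k + 1)) * Nat.choose (j + k) j := by ring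
    _ ≤ ((2*j+2*k+2) * (2*j+2*k+1)) * Nat.choose (j + k) j := by
        apply Nat.mul_le_mul_right
        calc 6 * (j + k + 1) = (2*j+2*k+2) * 3 := by ring
          _ ≤ (2*j+2*k+2) * (2*j+2*k+1) := Nat.mul_le_mul_left _ (by omega)
    _ = Nat.choose (j + k) j * ((2*j+2*k+2) * (2*j+2*k+1)) := by ring

lemma abs_a_succ_le (j k : ℕ) (hj : 1 ≤ j) : |a j (k+1)| ≤ |a j k| / 2 := by
  rw [abs_a, abs_a]
  have hfac : ((Nat.factorial (2 * j + 2 * (k+1))) : ℝ)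
      = ((2*(j:ℝ)+2*(k:ℝ)+2) * (2*(j:ℝ)+2*(k:ℝ)+1)) * Nat.factorial (2 * j + 2 * k) := by
    have h2 : 2*j+2*(k+1) = (2*j+2*k+1)+1 := by ring
    rw [h2, Nat.factorial_succ, Nat.factorial_succ]
    push_cast; ring
  have hF : (0:ℝ) < Nat.factorial (2 * j + 2 * k) := by positivity
  have hnat : 6 * (Nat.choose (j + k + 1) j : ℝ)
      ≤ (Nat.choose (j + k) j : ℝ) * ((2*(j:ℝ)+2*(k:ℝ)+2) * (2*(j:ℝ)+2*(k:ℝ)+1)) := by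
    exact_mod_cast nat_choose_ineq j k hj
  have hpk : (0:ℝ) ≤ (π ^ 2 / 4) ^ k := by positivity
  have hC' : (0:ℝ) ≤ (Nat.choose (j + k + 1) j : ℝ) := Nat.cast_nonneg _
  have hpi : π ^ 2 < 12 := pi_sq_lt_twelve
  have hjk1 : j + (k+1) = j + k + 1 := by omega
  rw [hjk1, hfac, pow_succ]
  rw [div_mul_eq_mul_div, div_mul_eq_mul_div, div_div,
    div_le_div_iff₀ (by positivity) (by positivity)]
  nlinarith [mul_le_mul_of_nonneg_left hnat (mul_nonneg hpk hF.le),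
    mul_le_mul_of_nonneg_right hpi.le (mul_nonneg (mul_nonneg hpk hF.le) hC'),
    mul_nonneg hpk hF.le, hC', hF]

lemma a_abs_pos (j k : ℕ) : 0 < |a j k| := by
  rw [abs_a]
  have : 0 < Nat.choose (j + k) j := Nat.choose_pos (by omega)
  have : (0:ℝ) < Nat.choose (j + k) j := by exact_mod_cast this
  positivity

lemma a_even_pos (j i : ℕ) : 0 < a j (2 * i) := by
  have h := a_abs_pos j (2 * i)
  rcases abs_cases (a j (2 * i)) with ⟨he, _⟩ | ⟨he, _⟩
  · linarith
  · exfalso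
    -- a j (2i) has sign of (-(π^2)/4)^(2i) which is positive
    unfold a at *
    have h1 : (0:ℝ) < (-(π ^ 2) / 4) ^ (2 * i) := by
      have : (-(π ^ 2) / 4) ^ (2 * i) = ((π ^ 2) / 4) ^ (2 * i) := by
        rw [show (-(π^2)/4 : ℝ) = -(π^2/4) by ring, Even.neg_pow (even_two_mul i)]
      rw [this]; positivity
    have hc : 0 < Nat.choose (j + 2 * i) j := Nat.choose_pos (by omega)
    have hc' : (0:ℝ) < Nat.choose (j + 2 * i) j := by exact_mod_cast hc
    have hf : (0:ℝ) < Nat.factorial (2 * j + 2 * (2 * i)) := by positivity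
    nlinarith [div_pos h1 hf]

lemma a_odd_neg (j i : ℕ) : a j (2 * i + 1) < 0 := by
  have h := a_abs_pos j (2 * i + 1)
  rcases abs_cases (a j (2 * i + 1)) with ⟨he, _⟩ | ⟨he, _⟩
  · exfalso
    unfold a at *
    have h1 : (-(π ^ 2) / 4) ^ (2 * i + 1) < 0 := by
      apply Odd.pow_neg ⟨i, by ring⟩
      nlinarith [Real.pi_pos]
    have hc : 0 < Nat.choose (j + (2 * i + 1)) j := Nat.choose_pos (by omega)
    have hc' : (0:ℝ) < Nat.choose (j + (2 * i + 1)) j := by exact_mod_cast hc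
    have hf : (0:ℝ) < Nat.factorial (2 * j + 2 * (2 * i + 1)) := by positivity
    nlinarith [div_neg_of_neg_of_pos h1 hf]
  · linarith

lemma pair_pos (j i : ℕ) (hj : 1 ≤ j) : 0 < a j (2 * i) + a j (2 * i + 1) := by
  have h1 := abs_a_succ_le j (2 * i) hj
  have h2 := a_even_pos j i
  have h3 := neg_abs_le (a j (2 * i + 1))
  rw [abs_of_pos h2] at h1
  linarith

lemma pair_neg (j i : ℕ) (hj : 1 ≤ j) : a j (2 * i + 1) + a j (2 * i + 2) < 0 := by
  have h1 := abs_a_succ_le j (2 * i + 1) hj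
  have h2 := a_odd_neg j i
  have h3 := le_abs_self (a j (2 * i + 2))
  rw [abs_of_neg h2] at h1
  have : (2 * i + 1) + 1 = 2 * i + 2 := by omega
  rw [this] at h1
  linarith

lemma summable_a_comp (j : ℕ) (c d : ℕ) (hc : 1 ≤ c) : Summable fun i => a j (c * i + d) := by
  apply (summable_a j).comp_injective
  intro m n h
  simp only at h
  exact Nat.eq_of_mul_eq_mul_left hc (Nat.add_right_cancel h)

lemma t_pos (j : ℕ) (hj : 1 ≤ j) : 0 < t j := by
  have he : Summable fun i => a j (2 * i) := by
    simpa using summable_a_comp j 2 0 (by norm_num)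
  have ho : Summable fun i => a j (2 * i + 1) := summable_a_comp j 2 1 (by norm_num)
  have hsum : t j = ∑' i, (a j (2 * i) + a j (2 * i + 1)) := by
    rw [t, (he.hasSum.even_add_odd ho.hasSum).tsum_eq, ← Summable.tsum_add he ho]
  rw [hsum]
  exact Summable.tsum_pos (he.add ho) (fun i => (pair_pos j i hj).le) 0 (pair_pos j 0 hj)

lemma t_lt (j : ℕ) (hj : 1 ≤ j) : t j < 1 / Nat.factorial (2 * j) := by
  have hshift : Summable fun k => a j (k + 1) := (summable_nat_add_iff 1).mpr (summable_a j)
  have he : Summable fun i => a j (2 * i + 1) := summable_a_comp j 2 1 (by norm_num)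
  have ho : Summable fun i => a j (2 * i + 2) := summable_a_comp j 2 2 (by norm_num)
  have h0 : a j 0 = 1 / Nat.factorial (2 * j) := by
    unfold a; simp
  have hsplit : t j = a j 0 + ∑' k, a j (k + 1) := Summable.tsum_eq_zero_add (summable_a j)
  have hpair : (∑' k, a j (k + 1)) = ∑' i, (a j (2 * i + 1) + a j (2 * i + 2)) := by
    have h2' : HasSum (fun i : ℕ => a j (2 * i + 1 + 1)) (∑' i, a j (2 * i + 2)) := by
      have hfe : (fun i : ℕ => a j (2 * i + 1 + 1)) = fun i : ℕ => a j (2 * i + 2) := by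
        funext i; congr 1
      rw [hfe]; exact ho.hasSum
    have key : HasSum (fun k => a j (k + 1))
        ((∑' i, a j (2 * i + 1)) + ∑' i, a j (2 * i + 2)) :=
      HasSum.even_add_odd he.hasSum h2'
    rw [key.tsum_eq, ← Summable.tsum_add he ho]
  have hneg : (∑' i, (a j (2 * i + 1) + a j (2 * i + 2))) < 0 := by
    have hs : Summable fun i => a j (2 * i + 1) + a j (2 * i + 2) := he.add ho
    have := Summable.tsum_pos hs.neg (g := fun i => -(a j (2 * i + 1) + a j (2 * i + 2)))
      (fun i => neg_nonneg.mpr (pair_neg j i hj).le) 0 (neg_pos.mpr (pair_neg j 0 hj))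
    rw [tsum_neg] at this
    linarith
  rw [hsplit, hpair, h0]
  linarith

lemma t_zero : t 0 = 0 := by
  have h := Real.cos_eq_tsum (π / 2)
  rw [Real.cos_pi_div_two] at h
  rw [t]
  rw [show (0:ℝ) = ∑' n : ℕ, (-1) ^ n * (π / 2) ^ (2 * n) / Nat.factorial (2 * n) from h]
  apply tsum_congr
  intro n
  unfold a
  have h2 : ((-1:ℝ)) ^ n * (π / 2) ^ (2 * n) = (-(π ^ 2) / 4) ^ n := by
    rw [pow_mul, ← mul_pow]; congr 1; ring
  rw [← h2]
  simp

lemma t_nonneg (j : ℕ) : 0 ≤ t j := by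
  cases j with
  | zero => rw [t_zero]
  | succ n => exact (t_pos (n + 1) (by omega)).le

lemma summable_F (y : ℝ) : Summable (fun p : ℕ × ℕ => a p.1 p.2 * y ^ p.1) := by
  have hbound : ∀ p : ℕ × ℕ, |a p.1 p.2 * y ^ p.1|
      ≤ ((2 * |y|) ^ p.1 / Nat.factorial p.1) * ((π ^ 2 / 2) ^ p.2 / Nat.factorial p.2) := by
    rintro ⟨j, k⟩
    simp only
    rw [abs_mul, abs_pow, abs_a]
    have hfle : (Nat.factorial j * Nat.factorial k : ℝ) ≤ Nat.factorial (2 * j + 2 * k) := by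
      have h1 : Nat.factorial j * Nat.factorial k ∣ Nat.factorial (j + k) :=
        Nat.factorial_mul_factorial_dvd_factorial_add j k
      have h2 : Nat.factorial (j + k) ≤ Nat.factorial (2 * j + 2 * k) :=
        Nat.factorial_le (by omega)
      exact_mod_cast le_trans (Nat.le_of_dvd (Nat.factorial_pos _) h1) h2
    have hc : (Nat.choose (j + k) j : ℝ) ≤ 2 ^ j * 2 ^ k := by
      rw [← pow_add]
      exact_mod_cast choose_le_two_pow' (j + k) j
    have hf : (0:ℝ) < Nat.factorial (2 * j + 2 * k) := by positivity
    have hjk : (0:ℝ) < Nat.factorial j * Nat.factorial k := by positivity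
    have step1 : (π ^ 2 / 4) ^ k / (Nat.factorial (2 * j + 2 * k)) * (Nat.choose (j + k) j)
        ≤ (π ^ 2 / 4) ^ k / (Nat.factorial j * Nat.factorial k) * (2 ^ j * 2 ^ k) := by
      apply mul_le_mul (div_le_div_of_nonneg_left (by positivity) hjk hfle) hc
        (by positivity) (by positivity)
    calc (π ^ 2 / 4) ^ k / (Nat.factorial (2 * j + 2 * k)) * (Nat.choose (j + k) j) * |y| ^ j
        ≤ (π ^ 2 / 4) ^ k / (Nat.factorial j * Nat.factorial k) * (2 ^ j * 2 ^ k) * |y| ^ j := by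
          apply mul_le_mul_of_nonneg_right step1 (by positivity)
      _ = ((2 * |y|) ^ j / Nat.factorial j) * (((π ^ 2 / 4) * 2) ^ k / Nat.factorial k) := by
          rw [mul_pow, mul_pow, div_mul_div_comm]; ring
      _ = ((2 * |y|) ^ j / Nat.factorial j) * ((π ^ 2 / 2) ^ k / Nat.factorial k) := by
          have h24 : (π ^ 2 / 4) * 2 = π ^ 2 / 2 := by ring
          rw [h24]
  apply Summable.of_abs
  apply Summable.of_nonneg_of_le (fun p => abs_nonneg _) hbound
  apply Summable.mul_of_nonneg (Real.summable_pow_div_factorial (2 * |y|))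
    (Real.summable_pow_div_factorial (π ^ 2 / 2))
  · intro j; positivity
  · intro k; positivity

lemma cos_eq_tsum_t (x : ℝ) :
    Real.cos (π * x) = ∑' j : ℕ, t j * (π ^ 2 * (1 / 4 - x ^ 2)) ^ j := by
  set y : ℝ := π ^ 2 * (1 / 4 - x ^ 2) with hy
  set F : ℕ × ℕ → ℝ := fun p => a p.1 p.2 * y ^ p.1 with hF
  have hFsum : Summable F := summable_F y
  set e := Finset.HasAntidiagonal.sigmaAntidiagonalEquivProd (A := ℕ) with he
  have hFe : Summable (F ∘ e) := (Equiv.summable_iff e).mpr hFsum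
  calc Real.cos (π * x)
      = ∑' n : ℕ, (-1) ^ n * (π * x) ^ (2 * n) / Nat.factorial (2 * n) :=
        Real.cos_eq_tsum (π * x)
    _ = ∑' n : ℕ, (∑ p ∈ Finset.HasAntidiagonal.antidiagonal n, F p) := by
        apply tsum_congr
        intro n
        rw [Finset.Nat.sum_antidiagonal_eq_sum_range_succ_mk]
        have hterm : ∀ k ∈ Finset.range (n + 1),
            F (k, n - k) = y ^ k * (-(π ^ 2) / 4) ^ (n - k) * (Nat.choose n k)
              / Nat.factorial (2 * n) := by
          intro k hk
          have hkn : k ≤ n := by have := Finset.mem_range.mp hk; omega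
          simp only [hF, a]
          rw [show 2 * k + 2 * (n - k) = 2 * n by omega, show k + (n - k) = n by omega]
          ring
        rw [Finset.sum_congr rfl hterm, ← Finset.sum_div, ← add_pow]
        have hbase : y + -(π ^ 2) / 4 = -((π * x) ^ 2) := by rw [hy]; ring
        rw [hbase]
        congr 1
        rw [pow_mul, ← mul_pow, neg_one_mul]
    _ = ∑' σ : (Σ n : ℕ, Finset.HasAntidiagonal.antidiagonal n), (F ∘ e) σ := by
        rw [Summable.tsum_sigma hFe]
        exact tsum_congr fun n => (Finset.tsum_subtype (Finset.HasAntidiagonal.antidiagonal n) F).symm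
    _ = ∑' p : ℕ × ℕ, F p := e.tsum_eq F
    _ = ∑' j : ℕ, t j * y ^ j := by
        rw [Summable.tsum_prod hFsum]
        apply tsum_congr
        intro j
        rw [t]
        simp only [hF]
        exact tsum_mul_right

set_option maxHeartbeats 1000000 in
/-- For `m ≥ 1` and `−1/2 < x < 1/2`,
`0 < cos(πx) − P_m(x) < π^{2m+2}(1/4−x²)^{m+1}/(2m+2)! · 1/(1−q_m)`,
where `q_m = (π²/4)/((2m+4)(2m+3))`. -/
theorem cos_sub_P_bound (m : ℕ) (hm : 1 ≤ m) (x : ℝ) (hx1 : -(1 / 2) < x) (hx2 : x < 1 / 2) :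
    0 < Real.cos (π * x) - P m x ∧
    Real.cos (π * x) - P m x <
      π ^ (2 * m + 2) * (1 / 4 - x ^ 2) ^ (m + 1) / (Nat.factorial (2 * m + 2)) *
        (1 / (1 - π ^ 2 / 4 / ((2 * (m : ℝ) + 4) * (2 * (m : ℝ) + 3)))) := by
  have hx4 : x ^ 2 < 1 / 4 := by nlinarith
  set y : ℝ := π ^ 2 * (1 / 4 - x ^ 2) with hy
  have hy0 : 0 < y := by
    have := Real.pi_pos
    apply mul_pos (by positivity) (by linarith)
  have hyle : y ≤ π ^ 2 / 4 := by nlinarith [sq_nonneg x, Real.pi_pos]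
  set q : ℝ := π ^ 2 / 4 / ((2 * (m : ℝ) + 4) * (2 * (m : ℝ) + 3)) with hq
  have hm' : (1:ℝ) ≤ m := by exact_mod_cast hm
  have hq0 : 0 ≤ q := by positivity
  have hq1 : q < 1 := by
    rw [hq, div_lt_one (by positivity)]
    nlinarith [pi_sq_lt_twelve]
  have hbound : ∀ j : ℕ, t j * y ^ j ≤ y ^ j / Nat.factorial j := by
    intro j
    cases Nat.eq_zero_or_pos j with
    | inl h => subst h; simp [t_zero]
    | inr h =>
      have h2 : (Nat.factorial j : ℝ) ≤ Nat.factorial (2 * j) :=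
        by exact_mod_cast Nat.factorial_le (by omega)
      have h3 : (0:ℝ) < Nat.factorial j := by positivity
      have h1 : t j ≤ 1 / Nat.factorial j := by
        have := t_lt j h
        have := one_div_le_one_div_of_le h3 h2
        linarith
      calc t j * y ^ j ≤ 1 / Nat.factorial j * y ^ j :=
            mul_le_mul_of_nonneg_right h1 (by positivity)
        _ = y ^ j / Nat.factorial j := by ring
  have hnn : ∀ j : ℕ, 0 ≤ t j * y ^ j := fun j => mul_nonneg (t_nonneg j) (by positivity)
  have hsumf : Summable fun j : ℕ => t j * y ^ j :=
    Summable.of_nonneg_of_le hnn hbound (Real.summable_pow_div_factorial y)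
  have hsplit := (Summable.sum_add_tsum_nat_add (m + 1) hsumf).symm
  have hrange : Finset.range (m + 1) = insert 0 (Finset.Icc 1 m) := by
    ext i; simp only [Finset.mem_range, Finset.mem_insert, Finset.mem_Icc]; omega
  have hPsum : ∑ j ∈ Finset.range (m + 1), t j * y ^ j = P m x := by
    rw [hrange, Finset.sum_insert (by simp), t_zero, zero_mul, zero_add, P]
    apply Finset.sum_congr rfl
    intro j hj
    rw [hy, mul_pow, ← pow_mul]
    ring
  have hR : Real.cos (π * x) - P m x = ∑' k : ℕ, t (k + (m + 1)) * y ^ (k + (m + 1)) := by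
    rw [cos_eq_tsum_t x, ← hy, hsplit, hPsum]
    ring
  have hsumtail : Summable fun k : ℕ => t (k + (m + 1)) * y ^ (k + (m + 1)) :=
    (summable_nat_add_iff (m + 1)).mpr hsumf
  constructor
  · rw [hR]
    exact Summable.tsum_pos hsumtail (fun k => hnn _) 0
      (mul_pos (t_pos (0 + (m + 1)) (by omega)) (by positivity))
  · have hgeo : ∀ k : ℕ, y ^ (k + (m + 1)) / (Nat.factorial (2 * (k + (m + 1))) : ℝ)
        ≤ y ^ (m + 1) / (Nat.factorial (2 * m + 2) : ℝ) * q ^ k := by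
      intro k
      induction k with
      | zero =>
        rw [show 2 * (0 + (m + 1)) = 2 * m + 2 by ring]
        simp
      | succ n ih =>
        have hfac : ((Nat.factorial (2 * ((n+1) + (m + 1)))) : ℝ)
            = ((2*(n:ℝ)+2*(m:ℝ)+4) * (2*(n:ℝ)+2*(m:ℝ)+3)) * Nat.factorial (2 * (n + (m+1))) := by
          have h2 : 2 * ((n+1)+(m+1)) = (2*(n+(m+1))+1)+1 := by ring
          rw [h2, Nat.factorial_succ, Nat.factorial_succ]
          push_cast; ring
        have hF : (0:ℝ) < Nat.factorial (2 * (n + (m + 1))) := by positivity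
        have hD : (0:ℝ) < (2*(n:ℝ)+2*(m:ℝ)+4) * (2*(n:ℝ)+2*(m:ℝ)+3) := by positivity
        have hstep : y / ((2*(n:ℝ)+2*(m:ℝ)+4) * (2*(n:ℝ)+2*(m:ℝ)+3)) ≤ q := by
          rw [hq]
          apply div_le_div₀ (by positivity) hyle (by positivity)
          nlinarith [Nat.cast_nonneg (α := ℝ) n]
        calc y ^ ((n+1) + (m+1)) / (Nat.factorial (2 * ((n+1) + (m+1))) : ℝ)
            = (y / ((2*(n:ℝ)+2*(m:ℝ)+4) * (2*(n:ℝ)+2*(m:ℝ)+3)))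
              * (y ^ (n + (m+1)) / Nat.factorial (2*(n+(m+1)))) := by
              rw [hfac, show (n+1)+(m+1) = (n+(m+1))+1 by ring, pow_succ]
              field_simp
          _ ≤ q * (y ^ (n+(m+1)) / Nat.factorial (2*(n+(m+1)))) :=
              mul_le_mul_of_nonneg_right hstep (by positivity)
          _ ≤ q * (y ^ (m+1) / Nat.factorial (2*m+2) * q ^ n) :=
              mul_le_mul_of_nonneg_left ih hq0
          _ = y ^ (m+1) / Nat.factorial (2*m+2) * q ^ (n+1) := by ring
    have hgsum2 : Summable fun k : ℕ => y ^ (m+1) / (Nat.factorial (2*m+2) : ℝ) * q ^ k :=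
      (summable_geometric_of_lt_one hq0 hq1).mul_left _
    have hgsum : Summable fun k : ℕ => y ^ (k+(m+1)) / (Nat.factorial (2*(k+(m+1))) : ℝ) :=
      Summable.of_nonneg_of_le (fun k => by positivity) hgeo hgsum2
    have hlt : (∑' k : ℕ, t (k+(m+1)) * y ^ (k+(m+1)))
        < ∑' k : ℕ, y ^ (k+(m+1)) / (Nat.factorial (2*(k+(m+1))) : ℝ) := by
      apply Summable.tsum_lt_tsum (i := 0) ?_ ?_ hsumtail hgsum
      · intro k
        have h1 : t (k+(m+1)) ≤ 1 / Nat.factorial (2*(k+(m+1))) := (t_lt _ (by omega)).le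
        calc t (k+(m+1)) * y ^ (k+(m+1))
            ≤ 1 / Nat.factorial (2*(k+(m+1))) * y ^ (k+(m+1)) :=
              mul_le_mul_of_nonneg_right h1 (by positivity)
          _ = y ^ (k+(m+1)) / Nat.factorial (2*(k+(m+1))) := by ring
      · have h1 := t_lt (0+(m+1)) (by omega)
        have hyp : (0:ℝ) < y ^ (0+(m+1)) := pow_pos hy0 _
        calc t (0+(m+1)) * y ^ (0+(m+1))
            < 1 / Nat.factorial (2*(0+(m+1))) * y ^ (0+(m+1)) :=
              mul_lt_mul_of_pos_right h1 hyp
          _ = y ^ (0+(m+1)) / Nat.factorial (2*(0+(m+1))) := by ring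
    have hle2 : (∑' k : ℕ, y ^ (k+(m+1)) / (Nat.factorial (2*(k+(m+1))) : ℝ))
        ≤ ∑' k : ℕ, y ^ (m+1) / (Nat.factorial (2*m+2) : ℝ) * q ^ k :=
      Summable.tsum_le_tsum hgeo hgsum hgsum2
    have hgeosum : (∑' k : ℕ, y ^ (m+1) / (Nat.factorial (2*m+2) : ℝ) * q ^ k)
        = y ^ (m+1) / (Nat.factorial (2*m+2) : ℝ) * (1/(1-q)) := by
      rw [tsum_mul_left, tsum_geometric_of_lt_one hq0 hq1, one_div]
    have hfin : y ^ (m+1) = π ^ (2*m+2) * (1/4 - x^2) ^ (m+1) := by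
      rw [hy, mul_pow, ← pow_mul, show 2*(m+1) = 2*m+2 by ring]
    rw [hR]
    calc (∑' k : ℕ, t (k+(m+1)) * y ^ (k+(m+1)))
        < ∑' k : ℕ, y ^ (k+(m+1)) / (Nat.factorial (2*(k+(m+1))) : ℝ) := hlt
      _ ≤ ∑' k : ℕ, y ^ (m+1) / (Nat.factorial (2*m+2) : ℝ) * q ^ k := hle2
      _ = y ^ (m+1) / (Nat.factorial (2*m+2) : ℝ) * (1/(1-q)) := hgeosum
      _ = π ^ (2*m+2) * (1/4 - x^2) ^ (m+1) / (Nat.factorial (2*m+2) : ℝ) * (1/(1-q)) := by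
          rw [hfin]
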